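/- arXiv:1202.2460 — 2 statements merged into one kernel-verified Lean document; each statement's English description precedes it below -/
import Mathlib

section
/- Let X be a finite set with |X| ≥ 2, let C be a cluster system for X, and let R be any subset of the set of ordered pairs of non-empty subsets of X. Then each of the four cluster systems C*(R_∥, sub) (which equals C*(R_∥, psub)), C*(R_disj, psub), C*(R_∥, sup) (which equals C*(R_∥, psup)), and C*(R_disj, psup) is a saturated patchwork. -/
/-- Two subsets `A`, `B` are compatible if `A ∩ B ∈ {∅, A, B}`. -/
def Compatible {α : Type*} [DecidableEq α] (A B : Finset α) : Prop :=
  A ∩ B = ∅ ∨ A ∩ B = A ∨ A ∩ B = B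

/-- A cluster system: a collection of non-empty subsets of `X`. -/
def IsCS {α : Type*} [DecidableEq α] (C : Set (Finset α)) : Prop :=
  ∀ A ∈ C, A.Nonempty

/-- The adjoint `C*`: all non-empty subsets of `X` compatible with every member of `C`. -/
def adjS {α : Type*} [DecidableEq α] (C : Set (Finset α)) : Set (Finset α) :=
  {A | A.Nonempty ∧ ∀ B ∈ C, Compatible A B}

/-- A hierarchy: a cluster system whose members are pairwise compatible. -/
def IsHierarchyS {α : Type*} [DecidableEq α] (C : Set (Finset α)) : Prop :=
  IsCS C ∧ ∀ A ∈ C, ∀ B ∈ C, Compatible A B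

/-- A maximal hierarchy: a hierarchy not properly contained in any other hierarchy. -/
def IsMaxHierarchyS {α : Type*} [DecidableEq α] (H : Set (Finset α)) : Prop :=
  IsHierarchyS H ∧ ∀ D : Set (Finset α), IsHierarchyS D → H ⊆ D → D = H

/-- A weak patchwork: incompatible members have their union in the system. -/
def IsWeakPW {α : Type*} [DecidableEq α] (C : Set (Finset α)) : Prop :=
  ∀ A ∈ C, ∀ B ∈ C, ¬Compatible A B → A ∪ B ∈ C

/-- A patchwork: incompatible members have both intersection and union in the system. -/
def IsPW {α : Type*} [DecidableEq α] (C : Set (Finset α)) : Prop :=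
  ∀ A ∈ C, ∀ B ∈ C, ¬Compatible A B → A ∩ B ∈ C ∧ A ∪ B ∈ C

/-- A saturated patchwork: for incompatible members `A`, `B`, the five sets
`A ∩ B`, `A ∪ B`, `A - B`, `B - A`, `(A ∪ B) - (A ∩ B)` lie in the system. -/
def IsSatPW {α : Type*} [DecidableEq α] (C : Set (Finset α)) : Prop :=
  ∀ A ∈ C, ∀ B ∈ C, ¬Compatible A B →
    A ∩ B ∈ C ∧ A ∪ B ∈ C ∧ A \ B ∈ C ∧ B \ A ∈ C ∧ (A ∪ B) \ (A ∩ B) ∈ C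

/-- The trivial cluster system: all singletons together with `X` itself. -/
def CtrivS (α : Type*) [Fintype α] [DecidableEq α] : Set (Finset α) :=
  {A | (∃ x : α, A = {x}) ∨ A = Finset.univ}

/-- `C` is ample: for every arc `(C₂, C₁)` of the Hasse diagram (i.e. `C₂ ⊊ C₁`
with nothing of `C` strictly between), `C₁ - C₂ ∈ C`. -/
def IsAmpleS {α : Type*} [DecidableEq α] (C : Set (Finset α)) : Prop :=
  ∀ C₁ ∈ C, ∀ C₂ ∈ C, C₂ ⊂ C₁ → (∀ B ∈ C, ¬(C₂ ⊂ B ∧ B ⊂ C₁)) → C₁ \ C₂ ∈ C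

/-- `R_disj`: the union of `R` with all disjoint pairs. -/
def Rdisj {α : Type*} [DecidableEq α] (R : Set (Finset α × Finset α)) :
    Set (Finset α × Finset α) :=
  R ∪ {p | p.1 ∩ p.2 = ∅}

/-- `R_∥`: the union of `R` with all compatible pairs. -/
def Rpar {α : Type*} [DecidableEq α] (R : Set (Finset α × Finset α)) :
    Set (Finset α × Finset α) :=
  R ∪ {p | Compatible p.1 p.2}

/-- `C*(R, sub)`. -/
def Csub {α : Type*} [DecidableEq α] (C : Set (Finset α))
    (R : Set (Finset α × Finset α)) : Set (Finset α) :=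
  {A ∈ adjS C | ∀ B ∈ C, ∀ B' ∈ C, B ⊆ A → B' ⊆ A → (B, B') ∈ R}

/-- `C*(R, psub)`. -/
def Cpsub {α : Type*} [DecidableEq α] (C : Set (Finset α))
    (R : Set (Finset α × Finset α)) : Set (Finset α) :=
  {A ∈ adjS C | ∀ B ∈ C, ∀ B' ∈ C, B ⊂ A → B' ⊂ A → (B, B') ∈ R}

/-- `C*(R, sup)`. -/
def Csup {α : Type*} [DecidableEq α] (C : Set (Finset α))
    (R : Set (Finset α × Finset α)) : Set (Finset α) :=
  {A ∈ adjS C | ∀ B ∈ C, ∀ B' ∈ C, A ⊆ B → A ⊆ B' → (B, B') ∈ R}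

/-- `C*(R, psup)`. -/
def Cpsup {α : Type*} [DecidableEq α] (C : Set (Finset α))
    (R : Set (Finset α × Finset α)) : Set (Finset α) :=
  {A ∈ adjS C | ∀ B ∈ C, ∀ B' ∈ C, A ⊂ B → A ⊂ B' → (B, B') ∈ R}

section Helpers
variable {α : Type*} [DecidableEq α]

lemma inter_empty_iff {A B : Finset α} : A ∩ B = ∅ ↔ ∀ x ∈ A, x ∉ B := by
  simp [Finset.eq_empty_iff_forall_notMem]

lemma compat_iff {A B : Finset α} :
    Compatible A B ↔ A ∩ B = ∅ ∨ A ⊆ B ∨ B ⊆ A := by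
  unfold Compatible
  rw [Finset.inter_eq_left, Finset.inter_eq_right]

lemma compat_symm {A B : Finset α} (h : Compatible A B) : Compatible B A := by
  rw [compat_iff] at h ⊢
  rcases h with h | h | h
  · exact Or.inl (by rwa [Finset.inter_comm])
  · exact Or.inr (Or.inr h)
  · exact Or.inr (Or.inl h)

lemma compat_of_subset {A B : Finset α} (h : A ⊆ B) : Compatible A B :=
  Or.inr (Or.inl (Finset.inter_eq_left.2 h))

lemma compat_of_superset {A B : Finset α} (h : B ⊆ A) : Compatible A B :=
  Or.inr (Or.inr (Finset.inter_eq_right.2 h))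

lemma incompat_iff {A A' : Finset α} :
    ¬Compatible A A' ↔ (A ∩ A').Nonempty ∧ ¬A ⊆ A' ∧ ¬A' ⊆ A := by
  rw [compat_iff, Finset.nonempty_iff_ne_empty]
  tauto

end Helpers

section Key
variable {α : Type*} [DecidableEq α]

lemma key1 {A A' B : Finset α} (hinc : ¬Compatible A A')
    (h1 : Compatible B A) (h2 : Compatible B A') :
    Compatible B (A ∩ A') ∧ Compatible B (A ∪ A') ∧ Compatible B (A \ A') ∧
      Compatible B (A' \ A) ∧ Compatible B ((A ∪ A') \ (A ∩ A')) := by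
  obtain ⟨hne, hnsub, hnsub'⟩ := incompat_iff.1 hinc
  obtain ⟨y, hy⟩ := hne
  rw [Finset.mem_inter] at hy
  rw [compat_iff] at h1 h2
  simp only [compat_iff, inter_empty_iff, Finset.subset_iff, Finset.mem_inter,
    Finset.mem_union, Finset.mem_sdiff]
  rcases h1 with h1 | h1 | h1 <;> rcases h2 with h2 | h2 | h2
  · -- disj, disj
    rw [inter_empty_iff] at h1 h2
    refine ⟨Or.inl fun x hx => ?_, Or.inl fun x hx => ?_, Or.inl fun x hx => ?_,
      Or.inl fun x hx => ?_, Or.inl fun x hx => ?_⟩ <;>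
      (have := h1 x hx; have := h2 x hx; tauto)
  · -- disj, B ⊆ A'
    rw [inter_empty_iff] at h1
    rw [Finset.subset_iff] at h2
    refine ⟨Or.inl fun x hx => ?_, Or.inr (Or.inl fun x hx => ?_),
      Or.inl fun x hx => ?_, Or.inr (Or.inl fun x hx => ?_),
      Or.inr (Or.inl fun x hx => ?_)⟩ <;>
      (have := h1 x hx; have := h2 hx; tauto)
  · -- disj, A' ⊆ B : contradiction
    rw [inter_empty_iff] at h1
    exact absurd hy.1 (h1 y (h2 hy.2))
  · -- B ⊆ A, disj
    rw [inter_empty_iff] at h2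
    rw [Finset.subset_iff] at h1
    refine ⟨Or.inl fun x hx => ?_, Or.inr (Or.inl fun x hx => ?_),
      Or.inr (Or.inl fun x hx => ?_), Or.inl fun x hx => ?_,
      Or.inr (Or.inl fun x hx => ?_)⟩ <;>
      (have := h1 hx; have := h2 x hx; tauto)
  · -- B ⊆ A, B ⊆ A'
    rw [Finset.subset_iff] at h1 h2
    refine ⟨Or.inr (Or.inl fun x hx => ?_), Or.inr (Or.inl fun x hx => ?_),
      Or.inl fun x hx => ?_, Or.inl fun x hx => ?_, Or.inl fun x hx => ?_⟩ <;>
      (have := h1 hx; have := h2 hx; tauto)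
  · -- B ⊆ A, A' ⊆ B : contradiction
    exact absurd (h2.trans h1) hnsub'
  · -- A ⊆ B, disj : contradiction
    rw [inter_empty_iff] at h2
    exact absurd hy.2 (h2 y (h1 hy.1))
  · -- A ⊆ B, B ⊆ A' : contradiction
    exact absurd (h1.trans h2) hnsub
  · -- A ⊆ B, A' ⊆ B
    rw [Finset.subset_iff] at h1 h2
    exact ⟨Or.inr (Or.inr fun x hx => h1 hx.1),
      Or.inr (Or.inr fun x hx => hx.elim (fun h => h1 h) fun h => h2 h),
      Or.inr (Or.inr fun x hx => h1 hx.1),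
      Or.inr (Or.inr fun x hx => h2 hx.1),
      Or.inr (Or.inr fun x hx => hx.1.elim (fun h => h1 h) fun h => h2 h)⟩

end Key

section Classify
variable {α : Type*} [DecidableEq α]

lemma classify_sub {A A' B : Finset α} (hinc : ¬Compatible A A')
    (h1 : Compatible B A) (h2 : Compatible B A') (hB : B ⊆ A ∪ A') :
    B ⊆ A ∨ B ⊆ A' ∨ B = A ∪ A' := by
  obtain ⟨hne, hnsub, hnsub'⟩ := incompat_iff.1 hinc
  rw [compat_iff] at h1 h2
  rcases h1 with h1 | h1 | h1
  · -- B ∩ A = ∅ → B ⊆ A'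
    rw [inter_empty_iff] at h1
    refine Or.inr (Or.inl fun x hx => ?_)
    rcases Finset.mem_union.1 (hB hx) with h | h
    · exact absurd h (h1 x hx)
    · exact h
  · exact Or.inl h1
  · -- A ⊆ B
    rcases h2 with h2 | h2 | h2
    · rw [inter_empty_iff] at h2
      refine Or.inl fun x hx => ?_
      rcases Finset.mem_union.1 (hB hx) with h | h
      · exact h
      · exact absurd h (h2 x hx)
    · exact absurd (h1.trans h2) hnsub
    · exact Or.inr (Or.inr (Finset.Subset.antisymm hB (Finset.union_subset h1 h2)))

lemma sup_extend {A A' B : Finset α} (hinc : ¬Compatible A A')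
    (h2 : Compatible B A') (hAB : A ⊆ B) : A' ⊆ B := by
  obtain ⟨hne, hnsub, hnsub'⟩ := incompat_iff.1 hinc
  obtain ⟨y, hy⟩ := hne
  rw [Finset.mem_inter] at hy
  rw [compat_iff] at h2
  rcases h2 with h2 | h2 | h2
  · rw [inter_empty_iff] at h2
    exact absurd hy.2 (h2 y (hAB hy.1))
  · exact absurd (hAB.trans h2) hnsub
  · exact h2

lemma sup_classify {A A' B D : Finset α} (hinc : ¬Compatible A A')
    (h1 : Compatible B A) (h2 : Compatible B A') (hD : D ⊆ B)
    (hcase : D = A ∩ A' ∨ D = A ∪ A' ∨ D = A \ A' ∨ D = A' \ A ∨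
      D = (A ∪ A') \ (A ∩ A')) :
    B = D ∨ (A ⊆ B ∧ A' ⊆ B) := by
  obtain ⟨hne, hnsub, hnsub'⟩ := incompat_iff.1 hinc
  have hinc' : ¬Compatible A' A := fun h => hinc (compat_symm h)
  obtain ⟨y, hy⟩ := hne
  rw [Finset.mem_inter] at hy
  have hAcase : A ⊆ B → A ⊆ B ∧ A' ⊆ B := fun h => ⟨h, sup_extend hinc h2 h⟩
  have hA'case : A' ⊆ B → A ⊆ B ∧ A' ⊆ B := fun h =>
    ⟨sup_extend hinc' h1 h, h⟩
  rw [compat_iff] at h1 h2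
  rcases hcase with rfl | rfl | rfl | rfl | rfl
  · -- D = A ∩ A'
    rcases h1 with h1 | h1 | h1
    · rw [inter_empty_iff] at h1
      exact absurd hy.1 (h1 y (hD (Finset.mem_inter.2 hy)))
    · rcases h2 with h2 | h2 | h2
      · rw [inter_empty_iff] at h2
        exact absurd hy.2 (h2 y (hD (Finset.mem_inter.2 hy)))
      · exact Or.inl (Finset.Subset.antisymm
          (Finset.subset_inter h1 h2) hD |>.symm ▸ rfl) -- fix below
      · exact Or.inr (hA'case h2)
    · exact Or.inr (hAcase h1)
  · -- D = A ∪ A'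
    exact Or.inr (hAcase (Finset.subset_union_left.trans hD))
  · -- D = A \ A'
    have hDne : (A \ A').Nonempty := Finset.sdiff_nonempty.2 hnsub
    obtain ⟨z, hz⟩ := hDne
    rw [Finset.mem_sdiff] at hz
    rcases h1 with h1 | h1 | h1
    · rw [inter_empty_iff] at h1
      exact absurd hz.1 (h1 z (hD (Finset.mem_sdiff.2 hz)))
    · -- B ⊆ A
      rcases h2 with h2 | h2 | h2
      · -- B ∩ A' = ∅ : B ⊆ A \ A', so B = D
        rw [inter_empty_iff] at h2
        refine Or.inl (Finset.Subset.antisymm (fun x hx => ?_) hD)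
        exact Finset.mem_sdiff.2 ⟨h1 hx, h2 x hx⟩
      · -- B ⊆ A' : contradiction, z ∈ D ⊆ B ⊆ A' but z ∉ A'
        exact absurd (h2 (hD (Finset.mem_sdiff.2 hz))) hz.2
      · exact absurd (h2.trans h1) hnsub'
    · exact Or.inr (hAcase h1)
  · -- D = A' \ A
    have hDne : (A' \ A).Nonempty := Finset.sdiff_nonempty.2 hnsub'
    obtain ⟨z, hz⟩ := hDne
    rw [Finset.mem_sdiff] at hz
    rcases h2 with h2 | h2 | h2
    · rw [inter_empty_iff] at h2
      exact absurd hz.1 (h2 z (hD (Finset.mem_sdiff.2 hz)))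
    · rcases h1 with h1 | h1 | h1
      · rw [inter_empty_iff] at h1
        refine Or.inl (Finset.Subset.antisymm (fun x hx => ?_) hD)
        exact Finset.mem_sdiff.2 ⟨h2 hx, h1 x hx⟩
      · exact absurd (h1 (hD (Finset.mem_sdiff.2 hz))) hz.2
      · exact absurd (h1.trans h2) hnsub
    · exact Or.inr (hA'case h2)
  · -- D = symdiff
    have hz1 : (A \ A').Nonempty := Finset.sdiff_nonempty.2 hnsub
    have hz2 : (A' \ A).Nonempty := Finset.sdiff_nonempty.2 hnsub'
    obtain ⟨z, hz⟩ := hz1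
    obtain ⟨w, hw⟩ := hz2
    rw [Finset.mem_sdiff] at hz hw
    have hzD : z ∈ (A ∪ A') \ (A ∩ A') := by
      simp only [Finset.mem_sdiff, Finset.mem_union, Finset.mem_inter]; tauto
    have hwD : w ∈ (A ∪ A') \ (A ∩ A') := by
      simp only [Finset.mem_sdiff, Finset.mem_union, Finset.mem_inter]; tauto
    rcases h1 with h1 | h1 | h1
    · rw [inter_empty_iff] at h1
      exact absurd hz.1 (h1 z (hD hzD))
    · exact absurd (h1 (hD hwD)) hw.2
    · exact Or.inr (hAcase h1)

end Classify

section Pair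
variable {α : Type*} [DecidableEq α] {C : Set (Finset α)} {R : Set (Finset α × Finset α)}
  {A A' B B' D : Finset α}

lemma mem_adjS : A ∈ adjS C ↔ A.Nonempty ∧ ∀ B ∈ C, Compatible A B := Iff.rfl

lemma mem_Rpar_of_compat (h : Compatible B B') : (B, B') ∈ Rpar R := Or.inr h

lemma mem_Rdisj_of_disj (h : B ∩ B' = ∅) : (B, B') ∈ Rdisj R := Or.inr h

lemma notinC (hinc : ¬Compatible A A') (hA' : A' ∈ adjS C) : A ∉ C :=
  fun h => hinc (compat_symm (hA'.2 A h))

lemma sub_pair (hA : A ∈ Csub C (Rpar R)) (hA' : A' ∈ Csub C (Rpar R))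
    (hinc : ¬Compatible A A') (hB : B ∈ C) (hB' : B' ∈ C)
    (h1 : B ⊆ A ∪ A') (h2 : B' ⊆ A ∪ A') : (B, B') ∈ Rpar R := by
  obtain ⟨hAadj, hAcond⟩ := hA
  obtain ⟨hA'adj, hA'cond⟩ := hA'
  have cBA : Compatible B A := compat_symm (hAadj.2 B hB)
  have cBA' : Compatible B A' := compat_symm (hA'adj.2 B hB)
  have cB'A : Compatible B' A := compat_symm (hAadj.2 B' hB')
  have cB'A' : Compatible B' A' := compat_symm (hA'adj.2 B' hB')
  rcases classify_sub hinc cBA cBA' h1 with hc | hc | rfl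
  · rcases classify_sub hinc cB'A cB'A' h2 with hc' | hc' | rfl
    · exact hAcond B hB B' hB' hc hc'
    · -- B ⊆ A, B' ⊆ A'
      rcases compat_iff.1 cB'A with hd | hs | hs
      · refine mem_Rpar_of_compat (Or.inl (inter_empty_iff.2 fun x hx hx' => ?_))
        exact inter_empty_iff.1 hd x hx' (hc hx)
      · exact hAcond B hB B' hB' hc hs
      · exact mem_Rpar_of_compat (compat_of_subset (hc.trans hs))
    · exact mem_Rpar_of_compat (compat_of_subset h1)
  · rcases classify_sub hinc cB'A cB'A' h2 with hc' | hc' | rfl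
    · -- B ⊆ A', B' ⊆ A
      rcases compat_iff.1 cBA with hd | hs | hs
      · refine mem_Rpar_of_compat (Or.inl (inter_empty_iff.2 fun x hx hx' => ?_))
        exact inter_empty_iff.1 hd x hx (hc' hx')
      · exact hAcond B hB B' hB' hs hc'
      · exact mem_Rpar_of_compat (compat_of_superset (hc'.trans hs))
    · exact hA'cond B hB B' hB' hc hc'
    · exact mem_Rpar_of_compat (compat_of_subset h1)
  · exact mem_Rpar_of_compat (compat_of_superset h2)

lemma psub_pair (hA : A ∈ Cpsub C (Rdisj R)) (hA' : A' ∈ Cpsub C (Rdisj R))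
    (hinc : ¬Compatible A A') (hB : B ∈ C) (hB' : B' ∈ C)
    (h1 : B ⊂ A ∪ A') (h2 : B' ⊂ A ∪ A') : (B, B') ∈ Rdisj R := by
  obtain ⟨hne, hnsub, hnsub'⟩ := incompat_iff.1 hinc
  obtain ⟨hAadj, hAcond⟩ := hA
  obtain ⟨hA'adj, hA'cond⟩ := hA'
  have hAnotC : A ∉ C := notinC hinc hA'adj
  have hA'notC : A' ∉ C := notinC (fun h => hinc (compat_symm h)) hAadj
  have cBA : Compatible B A := compat_symm (hAadj.2 B hB)
  have cBA' : Compatible B A' := compat_symm (hA'adj.2 B hB)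
  have cB'A : Compatible B' A := compat_symm (hAadj.2 B' hB')
  have cB'A' : Compatible B' A' := compat_symm (hA'adj.2 B' hB')
  have hcB : B ⊆ A ∨ B ⊆ A' := by
    rcases classify_sub hinc cBA cBA' h1.subset with hc | hc | rfl
    · exact Or.inl hc
    · exact Or.inr hc
    · exact absurd rfl h1.ne
  have hcB' : B' ⊆ A ∨ B' ⊆ A' := by
    rcases classify_sub hinc cB'A cB'A' h2.subset with hc | hc | rfl
    · exact Or.inl hc
    · exact Or.inr hc
    · exact absurd rfl h2.ne
  have pss : ∀ E, E ∈ C → E ⊆ A → E ⊂ A := fun E hE hEA =>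
    Finset.ssubset_iff_subset_ne.2 ⟨hEA, fun h => hAnotC (h ▸ hE)⟩
  have pss' : ∀ E, E ∈ C → E ⊆ A' → E ⊂ A' := fun E hE hEA =>
    Finset.ssubset_iff_subset_ne.2 ⟨hEA, fun h => hA'notC (h ▸ hE)⟩
  rcases hcB with hc | hc <;> rcases hcB' with hc' | hc'
  · exact hAcond B hB B' hB' (pss B hB hc) (pss B' hB' hc')
  · -- B ⊆ A, B' ⊆ A'
    rcases compat_iff.1 cB'A with hd | hs | hs
    · refine mem_Rdisj_of_disj (inter_empty_iff.2 fun x hx hx' => ?_)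
      exact inter_empty_iff.1 hd x hx' (hc hx)
    · exact hAcond B hB B' hB' (pss B hB hc) (pss B' hB' hs)
    · exact absurd (hs.trans (pss' B' hB' hc').subset) hnsub
  · -- B ⊆ A', B' ⊆ A
    rcases compat_iff.1 cBA with hd | hs | hs
    · refine mem_Rdisj_of_disj (inter_empty_iff.2 fun x hx hx' => ?_)
      exact inter_empty_iff.1 hd x hx (hc' hx')
    · exact hAcond B hB B' hB' (pss B hB hs) (pss B' hB' hc')
    · exact absurd (hs.trans (pss' B hB hc).subset) hnsub
  · exact hA'cond B hB B' hB' (pss' B hB hc) (pss' B' hB' hc')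

lemma sup_pair (hA : A ∈ Csup C (Rpar R)) (hA' : A' ∈ Csup C (Rpar R))
    (hinc : ¬Compatible A A') (hB : B ∈ C) (hB' : B' ∈ C)
    (hcase : D = A ∩ A' ∨ D = A ∪ A' ∨ D = A \ A' ∨ D = A' \ A ∨
      D = (A ∪ A') \ (A ∩ A'))
    (hD1 : D ⊆ B) (hD2 : D ⊆ B') : (B, B') ∈ Rpar R := by
  obtain ⟨hAadj, hAcond⟩ := hA
  obtain ⟨hA'adj, hA'cond⟩ := hA'
  have cBA : Compatible B A := compat_symm (hAadj.2 B hB)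
  have cBA' : Compatible B A' := compat_symm (hA'adj.2 B hB)
  have cB'A : Compatible B' A := compat_symm (hAadj.2 B' hB')
  have cB'A' : Compatible B' A' := compat_symm (hA'adj.2 B' hB')
  rcases sup_classify hinc cBA cBA' hD1 hcase with rfl | ⟨hAB, _⟩
  · exact mem_Rpar_of_compat (compat_of_subset hD2)
  · rcases sup_classify hinc cB'A cB'A' hD2 hcase with rfl | ⟨hAB', _⟩
    · exact mem_Rpar_of_compat (compat_of_superset hD1)
    · exact hAcond B hB B' hB' hAB hAB'

lemma psup_pair (hA : A ∈ Cpsup C (Rdisj R)) (hA' : A' ∈ Cpsup C (Rdisj R))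
    (hinc : ¬Compatible A A') (hB : B ∈ C) (hB' : B' ∈ C)
    (hcase : D = A ∩ A' ∨ D = A ∪ A' ∨ D = A \ A' ∨ D = A' \ A ∨
      D = (A ∪ A') \ (A ∩ A'))
    (hD1 : D ⊂ B) (hD2 : D ⊂ B') : (B, B') ∈ Rdisj R := by
  obtain ⟨hAadj, hAcond⟩ := hA
  obtain ⟨hA'adj, hA'cond⟩ := hA'
  have hAnotC : A ∉ C := notinC hinc hA'adj
  have cBA : Compatible B A := compat_symm (hAadj.2 B hB)
  have cBA' : Compatible B A' := compat_symm (hA'adj.2 B hB)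
  have cB'A : Compatible B' A := compat_symm (hAadj.2 B' hB')
  have cB'A' : Compatible B' A' := compat_symm (hA'adj.2 B' hB')
  have hAB : A ⊆ B := by
    rcases sup_classify hinc cBA cBA' hD1.subset hcase with rfl | ⟨h, _⟩
    · exact absurd rfl hD1.ne'
    · exact h
  have hAB' : A ⊆ B' := by
    rcases sup_classify hinc cB'A cB'A' hD2.subset hcase with rfl | ⟨h, _⟩
    · exact absurd rfl hD2.ne'
    · exact h
  have pss : ∀ E, E ∈ C → A ⊆ E → A ⊂ E := fun E hE hEA =>
    Finset.ssubset_iff_subset_ne.2 ⟨hEA, fun h => hAnotC (h ▸ hE)⟩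
  exact hAcond B hB B' hB' (pss B hB hAB) (pss B' hB' hAB')

end Pair


section Main
variable {α : Type*} [DecidableEq α]

lemma five_adj {A A' : Finset α} {C : Set (Finset α)} (hinc : ¬Compatible A A')
    (hA : A ∈ adjS C) (hA' : A' ∈ adjS C) :
    (A ∩ A') ∈ adjS C ∧ (A ∪ A') ∈ adjS C ∧ (A \ A') ∈ adjS C ∧
      (A' \ A) ∈ adjS C ∧ ((A ∪ A') \ (A ∩ A')) ∈ adjS C := by
  obtain ⟨hne, hnsub, hnsub'⟩ := incompat_iff.1 hinc
  have sd : A \ A' ⊆ (A ∪ A') \ (A ∩ A') := fun x hx => by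
    simp only [Finset.mem_sdiff, Finset.mem_union, Finset.mem_inter] at *; tauto
  have key : ∀ B ∈ C, Compatible (A ∩ A') B ∧ Compatible (A ∪ A') B ∧
      Compatible (A \ A') B ∧ Compatible (A' \ A) B ∧
      Compatible ((A ∪ A') \ (A ∩ A')) B := by
    intro B hB
    obtain ⟨k1, k2, k3, k4, k5⟩ :=
      key1 hinc (compat_symm (hA.2 B hB)) (compat_symm (hA'.2 B hB))
    exact ⟨compat_symm k1, compat_symm k2, compat_symm k3, compat_symm k4,
      compat_symm k5⟩
  exact ⟨⟨hne, fun B hB => (key B hB).1⟩,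
    ⟨hne.mono (Finset.inter_subset_left.trans Finset.subset_union_left),
      fun B hB => (key B hB).2.1⟩,
    ⟨Finset.sdiff_nonempty.2 hnsub, fun B hB => (key B hB).2.2.1⟩,
    ⟨Finset.sdiff_nonempty.2 hnsub', fun B hB => (key B hB).2.2.2.1⟩,
    ⟨(Finset.sdiff_nonempty.2 hnsub).mono sd, fun B hB => (key B hB).2.2.2.2⟩⟩

end Main


/-- The cluster systems `C*(R_∥, sub) = C*(R_∥, psub)`, `C*(R_disj, psub)`,
`C*(R_∥, sup) = C*(R_∥, psup)` and `C*(R_disj, psup)` are saturated patchworks. -/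
theorem stmt8 {α : Type*} [Fintype α] [DecidableEq α] (hcard : 2 ≤ Fintype.card α)
    (C : Set (Finset α)) (hC : IsCS C) (R : Set (Finset α × Finset α))
    (hR : ∀ p ∈ R, p.1.Nonempty ∧ p.2.Nonempty) :
    Csub C (Rpar R) = Cpsub C (Rpar R) ∧
    IsSatPW (Csub C (Rpar R)) ∧
    IsSatPW (Cpsub C (Rdisj R)) ∧
    Csup C (Rpar R) = Cpsup C (Rpar R) ∧
    IsSatPW (Csup C (Rpar R)) ∧
    IsSatPW (Cpsup C (Rdisj R)) := by
  
  have part1 : Csub C (Rpar R) = Cpsub C (Rpar R) := by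
    ext A
    constructor
    · rintro ⟨hadj, hcond⟩
      exact ⟨hadj, fun B hB B' hB' h1 h2 => hcond B hB B' hB' h1.subset h2.subset⟩
    · rintro ⟨hadj, hcond⟩
      refine ⟨hadj, fun B hB B' hB' h1 h2 => ?_⟩
      rcases eq_or_ne B A with rfl | hne
      · exact mem_Rpar_of_compat (compat_of_superset h2)
      rcases eq_or_ne B' A with rfl | hne'
      · exact mem_Rpar_of_compat (compat_of_subset h1)
      exact hcond B hB B' hB' (Finset.ssubset_iff_subset_ne.2 ⟨h1, hne⟩)
        (Finset.ssubset_iff_subset_ne.2 ⟨h2, hne'⟩)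
  have part4 : Csup C (Rpar R) = Cpsup C (Rpar R) := by
    ext A
    constructor
    · rintro ⟨hadj, hcond⟩
      exact ⟨hadj, fun B hB B' hB' h1 h2 => hcond B hB B' hB' h1.subset h2.subset⟩
    · rintro ⟨hadj, hcond⟩
      refine ⟨hadj, fun B hB B' hB' h1 h2 => ?_⟩
      rcases eq_or_ne A B with rfl | hne
      · exact mem_Rpar_of_compat (compat_of_subset h2)
      rcases eq_or_ne A B' with rfl | hne'
      · exact mem_Rpar_of_compat (compat_of_superset h1)
      exact hcond B hB B' hB' (Finset.ssubset_iff_subset_ne.2 ⟨h1, hne⟩)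
        (Finset.ssubset_iff_subset_ne.2 ⟨h2, hne'⟩)
  have u1 : ∀ A A' : Finset α, A ∩ A' ⊆ A ∪ A' :=
    fun A A' => Finset.inter_subset_left.trans Finset.subset_union_left
  have u3 : ∀ A A' : Finset α, A \ A' ⊆ A ∪ A' :=
    fun A A' => Finset.sdiff_subset.trans Finset.subset_union_left
  have u4 : ∀ A A' : Finset α, A' \ A ⊆ A ∪ A' :=
    fun A A' => Finset.sdiff_subset.trans Finset.subset_union_right
  have part2 : IsSatPW (Csub C (Rpar R)) := by
    intro A hA A' hA' hinc
    obtain ⟨j1, j2, j3, j4, j5⟩ := five_adj hinc hA.1 hA'.1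
    exact ⟨⟨j1, fun B hB B' hB' h1 h2 =>
        sub_pair hA hA' hinc hB hB' (h1.trans (u1 A A')) (h2.trans (u1 A A'))⟩,
      ⟨j2, fun B hB B' hB' h1 h2 => sub_pair hA hA' hinc hB hB' h1 h2⟩,
      ⟨j3, fun B hB B' hB' h1 h2 =>
        sub_pair hA hA' hinc hB hB' (h1.trans (u3 A A')) (h2.trans (u3 A A'))⟩,
      ⟨j4, fun B hB B' hB' h1 h2 =>
        sub_pair hA hA' hinc hB hB' (h1.trans (u4 A A')) (h2.trans (u4 A A'))⟩,
      ⟨j5, fun B hB B' hB' h1 h2 =>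
        sub_pair hA hA' hinc hB hB' (h1.trans Finset.sdiff_subset)
          (h2.trans Finset.sdiff_subset)⟩⟩
  have part3 : IsSatPW (Cpsub C (Rdisj R)) := by
    intro A hA A' hA' hinc
    obtain ⟨j1, j2, j3, j4, j5⟩ := five_adj hinc hA.1 hA'.1
    exact ⟨⟨j1, fun B hB B' hB' h1 h2 =>
        psub_pair hA hA' hinc hB hB' (lt_of_lt_of_le h1 (u1 A A'))
          (lt_of_lt_of_le h2 (u1 A A'))⟩,
      ⟨j2, fun B hB B' hB' h1 h2 => psub_pair hA hA' hinc hB hB' h1 h2⟩,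
      ⟨j3, fun B hB B' hB' h1 h2 =>
        psub_pair hA hA' hinc hB hB' (lt_of_lt_of_le h1 (u3 A A'))
          (lt_of_lt_of_le h2 (u3 A A'))⟩,
      ⟨j4, fun B hB B' hB' h1 h2 =>
        psub_pair hA hA' hinc hB hB' (lt_of_lt_of_le h1 (u4 A A'))
          (lt_of_lt_of_le h2 (u4 A A'))⟩,
      ⟨j5, fun B hB B' hB' h1 h2 =>
        psub_pair hA hA' hinc hB hB' (lt_of_lt_of_le h1 Finset.sdiff_subset)
          (lt_of_lt_of_le h2 Finset.sdiff_subset)⟩⟩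
  have part5 : IsSatPW (Csup C (Rpar R)) := by
    intro A hA A' hA' hinc
    obtain ⟨j1, j2, j3, j4, j5⟩ := five_adj hinc hA.1 hA'.1
    exact ⟨⟨j1, fun B hB B' hB' h1 h2 =>
        sup_pair hA hA' hinc hB hB' (Or.inl rfl) h1 h2⟩,
      ⟨j2, fun B hB B' hB' h1 h2 =>
        sup_pair hA hA' hinc hB hB' (Or.inr (Or.inl rfl)) h1 h2⟩,
      ⟨j3, fun B hB B' hB' h1 h2 =>
        sup_pair hA hA' hinc hB hB' (Or.inr (Or.inr (Or.inl rfl))) h1 h2⟩,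
      ⟨j4, fun B hB B' hB' h1 h2 =>
        sup_pair hA hA' hinc hB hB' (Or.inr (Or.inr (Or.inr (Or.inl rfl)))) h1 h2⟩,
      ⟨j5, fun B hB B' hB' h1 h2 =>
        sup_pair hA hA' hinc hB hB' (Or.inr (Or.inr (Or.inr (Or.inr rfl)))) h1 h2⟩⟩
  have part6 : IsSatPW (Cpsup C (Rdisj R)) := by
    intro A hA A' hA' hinc
    obtain ⟨j1, j2, j3, j4, j5⟩ := five_adj hinc hA.1 hA'.1
    exact ⟨⟨j1, fun B hB B' hB' h1 h2 =>
        psup_pair hA hA' hinc hB hB' (Or.inl rfl) h1 h2⟩,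
      ⟨j2, fun B hB B' hB' h1 h2 =>
        psup_pair hA hA' hinc hB hB' (Or.inr (Or.inl rfl)) h1 h2⟩,
      ⟨j3, fun B hB B' hB' h1 h2 =>
        psup_pair hA hA' hinc hB hB' (Or.inr (Or.inr (Or.inl rfl))) h1 h2⟩,
      ⟨j4, fun B hB B' hB' h1 h2 =>
        psup_pair hA hA' hinc hB hB' (Or.inr (Or.inr (Or.inr (Or.inl rfl)))) h1 h2⟩,
      ⟨j5, fun B hB B' hB' h1 h2 =>
        psup_pair hA hA' hinc hB hB' (Or.inr (Or.inr (Or.inr (Or.inr rfl)))) h1 h2⟩⟩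
  exact ⟨part1, part2, part3, part4, part5, part6⟩
end

section
/- Let X be a finite set with |X| ≥ 2. A cluster system C for X is a hierarchy if and only if its adjoint C* is ample (in which case C* is an ample saturated patchwork containing C_triv). Conversely, if C is an ample weak patchwork containing C_triv, then its adjoint C* is a hierarchy, and its double adjoint C** is an ample saturated patchwork containing C_triv. -/
/-!
If `𝒟` is ample and contains every singleton and `X`, no two sets compatible with all of `𝒟`
can be incompatible. Given `c ∈ A ∩ B`, `a ∈ A - B`, `b ∈ B - A`, a member of `𝒟` containing
two of `a`, `b`, `c` contains all three. Take `C₁ ∈ 𝒟` minimal containing `a, b`, and `C₂ ∈ 𝒟`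
maximal with `c ∈ C₂ ⊊ C₁` (the singleton `{c}` is a candidate). Then `(C₂, C₁)` is a Hasse arc,
`C₂` misses `a` and `b`, so `C₁ - C₂ ∈ 𝒟` contains `a, b` but not `c`. Applied to `𝒟 = C*` this
makes `C` a hierarchy, and applied to an ample `𝒟 = C` it makes `C*` one. Conversely, for a
hierarchy `C`, a member of `C` incompatible with `C₁ - C₂` for a Hasse arc `(C₂, C₁)` of `C*`
would lie strictly between `C₂` and `C₁` in `C*`. That `C*` is always a saturated patchwork is
an elementwise case analysis of how a set can sit against two others.
-/

section Compatibility

variable {α : Type*} [DecidableEq α] {A B D : Finset α}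

theorem compatible_iff : Compatible A B ↔ Disjoint A B ∨ A ⊆ B ∨ B ⊆ A := by
  rw [Compatible, Finset.inter_eq_left, Finset.inter_eq_right,
    ← Finset.disjoint_iff_inter_eq_empty]

theorem not_compatible_iff : ¬Compatible A B ↔ (A ∩ B).Nonempty ∧ ¬A ⊆ B ∧ ¬B ⊆ A := by
  rw [compatible_iff, ← Finset.not_disjoint_iff_nonempty_inter]
  tauto

theorem Compatible.symm (h : Compatible A B) : Compatible B A := by
  rw [compatible_iff] at *
  rcases h with h | h | h
  exacts [Or.inl h.symm, Or.inr (Or.inr h), Or.inr (Or.inl h)]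

theorem Compatible.subset_of_mem {x y : α} (h : Compatible D A) (hxA : x ∈ A) (hxD : x ∈ D)
    (hyD : y ∈ D) (hyA : y ∉ A) : A ⊆ D := by
  rcases compatible_iff.mp h with h | h | h
  · exact absurd hxA (Finset.disjoint_left.mp h hxD)
  · exact absurd (h hyD) hyA
  · exact h

theorem Compatible.inter (hA : Compatible D A) (hB : Compatible D B) :
    Compatible D (A ∩ B) := by
  rw [compatible_iff] at *
  rcases hA with hA | hA | hA <;> rcases hB with hB | hB | hB <;>
    simp only [Finset.disjoint_left, Finset.subset_iff, Finset.mem_inter] at * <;> grind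

theorem Compatible.union (hA : Compatible D A) (hB : Compatible D B) (hAB : (A ∩ B).Nonempty) :
    Compatible D (A ∪ B) := by
  rw [compatible_iff] at *
  obtain ⟨c, hc⟩ := hAB
  rcases hA with hA | hA | hA <;> rcases hB with hB | hB | hB <;>
    simp only [Finset.disjoint_left, Finset.subset_iff, Finset.mem_inter,
      Finset.mem_union] at * <;> grind

theorem Compatible.sdiff (hA : Compatible D A) (hB : Compatible D B) (hBA : ¬B ⊆ A) :
    Compatible D (A \ B) := by
  rw [compatible_iff] at *
  rcases hA with hA | hA | hA <;> rcases hB with hB | hB | hB <;>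
    simp only [Finset.disjoint_left, Finset.subset_iff, Finset.mem_sdiff] at * <;> grind

theorem Compatible.union_sdiff_inter (hA : Compatible D A) (hB : Compatible D B)
    (hAB : ¬Compatible A B) : Compatible D ((A ∪ B) \ (A ∩ B)) := by
  rw [compatible_iff] at *
  rcases hA with hA | hA | hA <;> rcases hB with hB | hB | hB <;>
    simp only [Finset.disjoint_left, Finset.subset_iff, Finset.mem_inter, Finset.mem_sdiff,
      Finset.mem_union, not_or] at * <;> grind

theorem Compatible.sdiff_of_not_between {C₁ C₂ : Finset α} (h₁ : Compatible D C₁)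
    (h₂ : Compatible D C₂) (hD : ¬(C₂ ⊂ D ∧ D ⊂ C₁)) : Compatible D (C₁ \ C₂) := by
  rw [compatible_iff] at *
  rcases h₁ with h₁ | h₁ | h₁ <;> rcases h₂ with h₂ | h₂ | h₂ <;>
    simp only [Finset.ssubset_def, Finset.disjoint_left, Finset.subset_iff,
      Finset.mem_sdiff] at * <;> grind

end Compatibility

section Adjoint

variable {α : Type*} [DecidableEq α]

theorem IsHierarchyS.subset_adjS {C : Set (Finset α)} (hC : IsHierarchyS C) : C ⊆ adjS C :=
  fun A hA => ⟨hC.1 A hA, fun B hB => hC.2 A hA B hB⟩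

theorem isSatPW_adjS (C : Set (Finset α)) : IsSatPW (adjS C) := by
  rintro A ⟨hAne, hA⟩ B ⟨hBne, hB⟩ hAB
  obtain ⟨hmeet, hAB', hBA⟩ := not_compatible_iff.mp hAB
  have hAsdiff : (A \ B).Nonempty := Finset.sdiff_nonempty.mpr hAB'
  refine ⟨⟨hmeet, fun D hD => ((hA D hD).symm.inter (hB D hD).symm).symm⟩,
    ⟨hAne.mono Finset.subset_union_left,
      fun D hD => ((hA D hD).symm.union (hB D hD).symm hmeet).symm⟩,
    ⟨hAsdiff, fun D hD => ((hA D hD).symm.sdiff (hB D hD).symm hBA).symm⟩,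
    ⟨Finset.sdiff_nonempty.mpr hBA, fun D hD => ((hB D hD).symm.sdiff (hA D hD).symm hAB').symm⟩,
    ⟨hAsdiff.mono (Finset.sdiff_subset_sdiff Finset.subset_union_left Finset.inter_subset_right),
      fun D hD => ((hA D hD).symm.union_sdiff_inter (hB D hD).symm hAB).symm⟩⟩

theorem isAmpleS_adjS_of_isHierarchyS {C : Set (Finset α)} (hC : IsHierarchyS C) :
    IsAmpleS (adjS C) := by
  intro C₁ ⟨_, hC₁⟩ C₂ ⟨_, hC₂⟩ hlt harc
  refine ⟨Finset.sdiff_nonempty.mpr hlt.not_subset, fun A hA => ?_⟩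
  exact ((hC₁ A hA).symm.sdiff_of_not_between (hC₂ A hA).symm
    (harc A (hC.subset_adjS hA))).symm

theorem ctrivS_subset_adjS [Fintype α] [Nonempty α] (C : Set (Finset α)) :
    CtrivS α ⊆ adjS C := by
  rintro A (⟨x, rfl⟩ | rfl)
  · refine ⟨Finset.singleton_nonempty x, fun B _ => compatible_iff.mpr ?_⟩
    by_cases hx : x ∈ B
    · exact Or.inr (Or.inl (Finset.singleton_subset_iff.mpr hx))
    · exact Or.inl (Finset.disjoint_singleton_left.mpr hx)
  · exact ⟨Finset.univ_nonempty, fun B _ => compatible_iff.mpr (Or.inr (Or.inr B.subset_univ))⟩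

theorem compatible_of_isAmpleS [Fintype α] {𝒟 : Set (Finset α)} (hample : IsAmpleS 𝒟)
    (htriv : CtrivS α ⊆ 𝒟) {A B : Finset α} (hA : ∀ D ∈ 𝒟, Compatible D A)
    (hB : ∀ D ∈ 𝒟, Compatible D B) : Compatible A B := by
  by_contra hAB
  obtain ⟨⟨c, hc⟩, hAB', hBA⟩ := not_compatible_iff.mp hAB
  obtain ⟨a, ha⟩ := Finset.sdiff_nonempty.mpr hAB'
  obtain ⟨b, hb⟩ := Finset.sdiff_nonempty.mpr hBA
  simp only [Finset.mem_inter, Finset.mem_sdiff] at ha hb hc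
  have hab_c : ∀ D ∈ 𝒟, a ∈ D → b ∈ D → c ∈ D := fun D hD haD hbD =>
    (hA D hD).subset_of_mem ha.1 haD hbD hb.2 hc.1
  have hac_b : ∀ D ∈ 𝒟, a ∈ D → c ∈ D → b ∈ D := fun D hD haD hcD =>
    (hB D hD).subset_of_mem hc.2 hcD haD ha.2 hb.1
  have hbc_a : ∀ D ∈ 𝒟, b ∈ D → c ∈ D → a ∈ D := fun D hD hbD hcD =>
    (hA D hD).subset_of_mem hc.1 hcD hbD hb.2 ha.1
  obtain ⟨C₁, hC₁min⟩ := exists_minimal_of_wellFoundedLT (fun D => D ∈ 𝒟 ∧ a ∈ D ∧ b ∈ D)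
    ⟨_, htriv (Or.inr rfl), Finset.mem_univ a, Finset.mem_univ b⟩
  obtain ⟨hC₁, haC₁, hbC₁⟩ := hC₁min.prop
  have hcC₁ := hab_c C₁ hC₁ haC₁ hbC₁
  have hc_lt : {c} ⊂ C₁ := Finset.singleton_subset_iff.mpr hcC₁ |>.ssubset_of_ne
    fun h => ha.2 (Finset.mem_singleton.mp (h ▸ haC₁) ▸ hc.2)
  obtain ⟨C₂, hC₂max⟩ := exists_maximal_of_wellFoundedGT (fun D => D ∈ 𝒟 ∧ c ∈ D ∧ D ⊂ C₁)
    ⟨_, htriv (Or.inl ⟨c, rfl⟩), Finset.mem_singleton_self c, hc_lt⟩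
  obtain ⟨hC₂, hcC₂, hC₂C₁⟩ := hC₂max.prop
  have haC₂ : a ∉ C₂ := fun haC₂ =>
    hC₁min.not_lt ⟨hC₂, haC₂, hac_b C₂ hC₂ haC₂ hcC₂⟩ hC₂C₁
  have hbC₂ : b ∉ C₂ := fun hbC₂ =>
    hC₁min.not_lt ⟨hC₂, hbc_a C₂ hC₂ hbC₂ hcC₂, hbC₂⟩ hC₂C₁
  have harc : ∀ E ∈ 𝒟, ¬(C₂ ⊂ E ∧ E ⊂ C₁) := fun E hE ⟨hC₂E, hEC₁⟩ =>
    hC₂max.not_gt ⟨hE, hC₂E.subset hcC₂, hEC₁⟩ hC₂E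
  have hdiff := hample C₁ hC₁ C₂ hC₂ hC₂C₁ harc
  exact (Finset.mem_sdiff.mp (hab_c _ hdiff (Finset.mem_sdiff.mpr ⟨haC₁, haC₂⟩)
    (Finset.mem_sdiff.mpr ⟨hbC₁, hbC₂⟩))).2 hcC₂

theorem isHierarchyS_adjS_of_isAmpleS [Fintype α] {𝒟 : Set (Finset α)} (hample : IsAmpleS 𝒟)
    (htriv : CtrivS α ⊆ 𝒟) : IsHierarchyS (adjS 𝒟) :=
  ⟨fun _ hA => hA.1, fun _ hA _ hB =>
    compatible_of_isAmpleS hample htriv (fun D hD => (hA.2 D hD).symm)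
      (fun D hD => (hB.2 D hD).symm)⟩

end Adjoint

/-- A cluster system `C` is a hierarchy iff its adjoint `C*` is ample (in which case
`C*` is an ample saturated patchwork containing `C_triv`); conversely, the adjoint of
any ample weak patchwork containing `C_triv` is a hierarchy, and its double adjoint is
an ample saturated patchwork containing `C_triv`. -/
theorem stmt10 {α : Type*} [Fintype α] [DecidableEq α] (hcard : 2 ≤ Fintype.card α)
    (C : Set (Finset α)) (hC : IsCS C) :
    (IsHierarchyS C ↔ IsAmpleS (adjS C)) ∧
    (IsHierarchyS C →
      IsAmpleS (adjS C) ∧ IsSatPW (adjS C) ∧ CtrivS α ⊆ adjS C) ∧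
    ((IsWeakPW C ∧ IsAmpleS C ∧ CtrivS α ⊆ C) →
      IsHierarchyS (adjS C) ∧ IsAmpleS (adjS (adjS C)) ∧ IsSatPW (adjS (adjS C)) ∧
        CtrivS α ⊆ adjS (adjS C)) := by
  have : Nonempty α := Fintype.card_pos_iff.mp (by omega)
  refine ⟨⟨isAmpleS_adjS_of_isHierarchyS, fun hample => ⟨hC, fun A hA B hB => ?_⟩⟩,
    fun hH => ⟨isAmpleS_adjS_of_isHierarchyS hH, isSatPW_adjS C, ctrivS_subset_adjS C⟩,
    fun ⟨_, hample, htriv⟩ => ?_⟩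
  · exact compatible_of_isAmpleS hample (ctrivS_subset_adjS C) (fun D hD => hD.2 A hA)
      (fun D hD => hD.2 B hB)
  · have hH := isHierarchyS_adjS_of_isAmpleS hample htriv
    exact ⟨hH, isAmpleS_adjS_of_isHierarchyS hH, isSatPW_adjS _, ctrivS_subset_adjS _⟩
end
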